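/- arXiv:1404.5113 — 12 statements merged into one kernel-verified Lean document; each statement's English description precedes it below -/
import Mathlib

section
/- If Σ_{i=1}^p α_i > Σ_{j=1}^q β_j with all α_i, β_j > 0, all the sets Ω_i are nonempty, closed, convex and bounded, and the Θ_j are nonempty closed convex sets, then the function f(x) = Σ_i α_i d(x; Ω_i) − Σ_j β_j d(x; Θ_j) is coercive (f(x) → +∞ as ‖x‖ → ∞), and hence attains its minimum over any nonempty closed convex set S ⊂ R^n. -/
theorem coercive_and_attains_min (n p q : ℕ)
    (Ω : Fin p → Set (EuclideanSpace ℝ (Fin n)))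
    (Θ : Fin q → Set (EuclideanSpace ℝ (Fin n)))
    (hΩ : ∀ i, (Ω i).Nonempty ∧ IsClosed (Ω i) ∧ Convex ℝ (Ω i)
              ∧ Bornology.IsBounded (Ω i))
    (hΘ : ∀ j, (Θ j).Nonempty ∧ IsClosed (Θ j) ∧ Convex ℝ (Θ j))
    (α : Fin p → ℝ) (β : Fin q → ℝ)
    (hα : ∀ i, 0 < α i) (hβ : ∀ j, 0 < β j)
    (hw : ∑ j, β j < ∑ i, α i)
    (f : EuclideanSpace ℝ (Fin n) → ℝ)
    (hf : ∀ x, f x = ∑ i, α i * Metric.infDist x (Ω i)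
                    - ∑ j, β j * Metric.infDist x (Θ j)) :
    (∀ M : ℝ, ∃ R : ℝ, ∀ x, R ≤ ‖x‖ → M ≤ f x) ∧
    (∀ S : Set (EuclideanSpace ℝ (Fin n)), S.Nonempty → IsClosed S → Convex ℝ S →
      ∃ xb ∈ S, ∀ x ∈ S, f xb ≤ f x) := by
  classical
  -- choose bounds C i for Ω i
  have hC : ∀ i, ∃ C : ℝ, ∀ y ∈ Ω i, ‖y‖ ≤ C := fun i =>
    (hΩ i).2.2.2.exists_norm_le
  choose C hCle using hC
  -- choose points θ j ∈ Θ j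
  choose θ hθ using fun j => (hΘ j).1
  set δ : ℝ := ∑ i, α i - ∑ j, β j with hδ
  have hδpos : 0 < δ := sub_pos.2 hw
  set K : ℝ := ∑ i, α i * C i + ∑ j, β j * ‖θ j‖ with hK
  -- main lower bound
  have hlow : ∀ x : EuclideanSpace ℝ (Fin n), δ * ‖x‖ - K ≤ f x := by
    intro x
    have h1 : ∀ i, α i * (‖x‖ - C i) ≤ α i * Metric.infDist x (Ω i) := by
      intro i
      refine mul_le_mul_of_nonneg_left ?_ (hα i).le
      by_contra h
      push_neg at h
      rw [Metric.infDist_lt_iff (hΩ i).1] at h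
      obtain ⟨y, hy, hd⟩ := h
      have := norm_sub_norm_le x y
      have hyC := hCle i y hy
      rw [← dist_eq_norm] at this
      linarith
    have h2 : ∀ j, β j * Metric.infDist x (Θ j) ≤ β j * (‖x‖ + ‖θ j‖) := by
      intro j
      refine mul_le_mul_of_nonneg_left ?_ (hβ j).le
      calc Metric.infDist x (Θ j) ≤ dist x (θ j) := Metric.infDist_le_dist_of_mem (hθ j)
        _ ≤ ‖x‖ + ‖θ j‖ := by rw [dist_eq_norm]; exact norm_sub_le x (θ j)
    have hs1 : ∑ i, α i * (‖x‖ - C i) ≤ ∑ i, α i * Metric.infDist x (Ω i) :=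
      Finset.sum_le_sum fun i _ => h1 i
    have hs2 : ∑ j, β j * Metric.infDist x (Θ j) ≤ ∑ j, β j * (‖x‖ + ‖θ j‖) :=
      Finset.sum_le_sum fun j _ => h2 j
    have e1 : ∑ i, α i * (‖x‖ - C i) = (∑ i, α i) * ‖x‖ - ∑ i, α i * C i := by
      simp only [mul_sub]
      rw [Finset.sum_sub_distrib, Finset.sum_mul]
    have e2 : ∑ j, β j * (‖x‖ + ‖θ j‖) = (∑ j, β j) * ‖x‖ + ∑ j, β j * ‖θ j‖ := by
      simp only [mul_add]
      rw [Finset.sum_add_distrib, Finset.sum_mul]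
    rw [hf x]
    have := sub_le_sub hs1 hs2
    rw [e1, e2] at this
    calc δ * ‖x‖ - K = ((∑ i, α i) * ‖x‖ - ∑ i, α i * C i) -
        ((∑ j, β j) * ‖x‖ + ∑ j, β j * ‖θ j‖) := by rw [hδ, hK]; ring
      _ ≤ _ := this
  have coercive : ∀ M : ℝ, ∃ R : ℝ, ∀ x, R ≤ ‖x‖ → M ≤ f x := by
    intro M
    refine ⟨(M + K) / δ, fun x hx => ?_⟩
    have h1 : M + K ≤ δ * ‖x‖ := by
      rw [div_le_iff₀ hδpos] at hx
      linarith [mul_comm ‖x‖ δ]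
    linarith [hlow x]
  refine ⟨coercive, fun S hSne hScl _ => ?_⟩
  obtain ⟨x0, hx0⟩ := hSne
  obtain ⟨R, hR⟩ := coercive (f x0)
  -- continuity of f
  have hfc : Continuous f := by
    have : Continuous fun x : EuclideanSpace ℝ (Fin n) =>
        ∑ i, α i * Metric.infDist x (Ω i) - ∑ j, β j * Metric.infDist x (Θ j) := by
      apply Continuous.sub
      · exact continuous_finset_sum _ fun i _ =>
          continuous_const.mul (Metric.continuous_infDist_pt (Ω i))
      · exact continuous_finset_sum _ fun j _ =>
          continuous_const.mul (Metric.continuous_infDist_pt (Θ j))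
    exact (funext hf : f = _) ▸ this
  set R' : ℝ := max R ‖x0‖ with hR'
  have hKcpt : IsCompact (S ∩ Metric.closedBall 0 R') :=
    (isCompact_closedBall (0 : EuclideanSpace ℝ (Fin n)) R').inter_left hScl
  have hKne : (S ∩ Metric.closedBall 0 R').Nonempty :=
    ⟨x0, hx0, by simp [hR', dist_eq_norm]⟩
  obtain ⟨xb, ⟨hxbS, hxbB⟩, hxbmin⟩ :=
    hKcpt.exists_isMinOn hKne (hfc.continuousOn)
  refine ⟨xb, hxbS, fun x hxS => ?_⟩
  by_cases hxB : x ∈ Metric.closedBall (0 : EuclideanSpace ℝ (Fin n)) R'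
  · exact hxbmin ⟨hxS, hxB⟩
  · have hxn : R ≤ ‖x‖ := by
      simp only [Metric.mem_closedBall, dist_zero_right, not_le] at hxB
      exact le_of_lt (lt_of_le_of_lt (le_max_left _ _) hxB)
    have h0 : f xb ≤ f x0 := hxbmin ⟨hx0, by simp [hR', dist_eq_norm]⟩
    exact le_trans h0 (hR x hxn)
end

section
/- If Σ_{i=1}^p α_i < Σ_{j=1}^q β_j with all α_i, β_j > 0, S is a nonempty closed convex unbounded set, the Ω_i are nonempty closed convex sets, and all the sets Θ_j are nonempty, closed, convex and bounded, then inf{f(x) : x ∈ S} = −∞, where f(x) = Σ_i α_i d(x; Ω_i) − Σ_j β_j d(x; Θ_j). -/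
theorem inf_eq_neg_infty (n p q : ℕ)
    (S : Set (EuclideanSpace ℝ (Fin n)))
    (hS : S.Nonempty) (hSc : IsClosed S) (hSconv : Convex ℝ S)
    (hSunb : ∀ R : ℝ, ∃ x ∈ S, R < ‖x‖)
    (Ω : Fin p → Set (EuclideanSpace ℝ (Fin n)))
    (Θ : Fin q → Set (EuclideanSpace ℝ (Fin n)))
    (hΩ : ∀ i, (Ω i).Nonempty ∧ IsClosed (Ω i) ∧ Convex ℝ (Ω i))
    (hΘ : ∀ j, (Θ j).Nonempty ∧ IsClosed (Θ j) ∧ Convex ℝ (Θ j)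
              ∧ Bornology.IsBounded (Θ j))
    (α : Fin p → ℝ) (β : Fin q → ℝ)
    (hα : ∀ i, 0 < α i) (hβ : ∀ j, 0 < β j)
    (hw : ∑ i, α i < ∑ j, β j)
    (f : EuclideanSpace ℝ (Fin n) → ℝ)
    (hf : ∀ x, f x = ∑ i, α i * Metric.infDist x (Ω i)
                    - ∑ j, β j * Metric.infDist x (Θ j)) :
    ∀ M : ℝ, ∃ x ∈ S, f x < M := by
  intro M
  choose ω hω using fun i => (hΩ i).1
  choose C hC using fun j =>
    isBounded_iff_forall_norm_le.mp (hΘ j).2.2.2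
  set A := ∑ i, α i * ‖ω i‖ with hA
  set Cs := ∑ j, β j * C j with hCs
  set δ := (∑ j, β j) - (∑ i, α i) with hδdef
  have hδ : 0 < δ := by simp only [hδdef]; linarith
  obtain ⟨x, hxS, hx⟩ := hSunb ((A + Cs - M) / δ)
  refine ⟨x, hxS, ?_⟩
  have h1 : ∑ i, α i * Metric.infDist x (Ω i) ≤ (∑ i, α i) * ‖x‖ + A := by
    rw [Finset.sum_mul, ← Finset.sum_add_distrib]
    apply Finset.sum_le_sum
    intro i _
    have : Metric.infDist x (Ω i) ≤ ‖x‖ + ‖ω i‖ := by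
      calc Metric.infDist x (Ω i) ≤ dist x (ω i) := Metric.infDist_le_dist_of_mem (hω i)
        _ ≤ ‖x‖ + ‖ω i‖ := by
          rw [dist_eq_norm]; exact norm_sub_le _ _
    nlinarith [(hα i).le]
  have h2 : (∑ j, β j) * ‖x‖ - Cs ≤ ∑ j, β j * Metric.infDist x (Θ j) := by
    rw [Finset.sum_mul, hCs, ← Finset.sum_sub_distrib]
    apply Finset.sum_le_sum
    intro j _
    have : ‖x‖ - C j ≤ Metric.infDist x (Θ j) := by
      by_contra h
      push_neg at h
      obtain ⟨y, hy, hd⟩ := (Metric.infDist_lt_iff (hΘ j).1).mp h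
      have h3 := hC j y hy
      have : ‖x‖ - ‖y‖ ≤ dist x y := by
        rw [dist_eq_norm]; exact norm_sub_norm_le _ _
      linarith
    nlinarith [(hβ j).le]
  have key : f x ≤ -δ * ‖x‖ + A + Cs := by
    rw [hf x, hδdef]; nlinarith
  have : A + Cs - M < δ * ‖x‖ := by
    rw [div_lt_iff₀ hδ] at hx; linarith [hx]
  linarith
end

section
/- If Σ_{i=1}^p α_i = Σ_{j=1}^q β_j with all α_i, β_j > 0, and all the sets Ω_i and Θ_j are nonempty, closed, convex and bounded in R^n, then the function f(x) = Σ_i α_i d(x; Ω_i) − Σ_j β_j d(x; Θ_j) is bounded on R^n: there exists γ > 0 with |f(x)| ≤ γ for all x. -/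
lemma infDist_sub_dist_abs_le {E : Type*} [NormedAddCommGroup E]
    (S : Set E) (R : ℝ) (hne : S.Nonempty) (hS : S ⊆ Metric.closedBall 0 R)
    (x : E) : |Metric.infDist x S - dist x 0| ≤ R := by
  rw [abs_sub_le_iff]
  constructor
  · obtain ⟨a, ha⟩ := hne
    have h1 : Metric.infDist x S ≤ dist x a := Metric.infDist_le_dist_of_mem ha
    have h2 : dist x a ≤ dist x 0 + dist 0 a := dist_triangle _ _ _
    have h3 : dist 0 a ≤ R := by rw [dist_comm]; exact hS ha
    linarith
  · have : dist x 0 - R ≤ Metric.infDist x S := by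
      by_contra h
      push_neg at h
      obtain ⟨a, ha, hlt⟩ := (Metric.infDist_lt_iff hne).mp h
      have h2 : dist x 0 ≤ dist x a + dist a 0 := dist_triangle _ _ _
      have h3 : dist a 0 ≤ R := hS ha
      linarith
    linarith

theorem f_bounded_when_equal_weights (n p q : ℕ)
    (Ω : Fin p → Set (EuclideanSpace ℝ (Fin n)))
    (Θ : Fin q → Set (EuclideanSpace ℝ (Fin n)))
    (hΩ : ∀ i, (Ω i).Nonempty ∧ IsClosed (Ω i) ∧ Convex ℝ (Ω i)
              ∧ Bornology.IsBounded (Ω i))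
    (hΘ : ∀ j, (Θ j).Nonempty ∧ IsClosed (Θ j) ∧ Convex ℝ (Θ j)
              ∧ Bornology.IsBounded (Θ j))
    (α : Fin p → ℝ) (β : Fin q → ℝ)
    (hα : ∀ i, 0 < α i) (hβ : ∀ j, 0 < β j)
    (hw : ∑ i, α i = ∑ j, β j)
    (f : EuclideanSpace ℝ (Fin n) → ℝ)
    (hf : ∀ x, f x = ∑ i, α i * Metric.infDist x (Ω i)
                    - ∑ j, β j * Metric.infDist x (Θ j)) :
    ∃ γ > 0, ∀ x, |f x| ≤ γ := by
  choose RΩ hRΩ using fun i => ((hΩ i).2.2.2).subset_closedBall 0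
  choose RΘ hRΘ using fun j => ((hΘ j).2.2.2).subset_closedBall 0
  have hRΩ0 : ∀ i, 0 ≤ RΩ i := fun i => by
    obtain ⟨a, ha⟩ := (hΩ i).1
    exact le_trans dist_nonneg (Metric.mem_closedBall.mp (hRΩ i ha))
  have hRΘ0 : ∀ j, 0 ≤ RΘ j := fun j => by
    obtain ⟨a, ha⟩ := (hΘ j).1
    exact le_trans dist_nonneg (Metric.mem_closedBall.mp (hRΘ j ha))
  have hs1 : 0 ≤ ∑ i, α i * RΩ i :=
    Finset.sum_nonneg fun i _ => mul_nonneg (hα i).le (hRΩ0 i)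
  have hs2 : 0 ≤ ∑ j, β j * RΘ j :=
    Finset.sum_nonneg fun j _ => mul_nonneg (hβ j).le (hRΘ0 j)
  refine ⟨∑ i, α i * RΩ i + ∑ j, β j * RΘ j + 1, by linarith, fun x => ?_⟩
  have key : f x = ∑ i, α i * (Metric.infDist x (Ω i) - dist x 0)
      - ∑ j, β j * (Metric.infDist x (Θ j) - dist x 0) := by
    rw [hf x]
    simp only [mul_sub, Finset.sum_sub_distrib, ← Finset.sum_mul, hw]
    ring
  rw [key]
  have h1 : |∑ i, α i * (Metric.infDist x (Ω i) - dist x 0)| ≤ ∑ i, α i * RΩ i := by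
    refine (Finset.abs_sum_le_sum_abs _ _).trans (Finset.sum_le_sum fun i _ => ?_)
    rw [abs_mul, abs_of_pos (hα i)]
    exact mul_le_mul_of_nonneg_left
      (infDist_sub_dist_abs_le _ _ (hΩ i).1 (hRΩ i) x) (hα i).le
  have h2 : |∑ j, β j * (Metric.infDist x (Θ j) - dist x 0)| ≤ ∑ j, β j * RΘ j := by
    refine (Finset.abs_sum_le_sum_abs _ _).trans (Finset.sum_le_sum fun j _ => ?_)
    rw [abs_mul, abs_of_pos (hβ j)]
    exact mul_le_mul_of_nonneg_left
      (infDist_sub_dist_abs_le _ _ (hΘ j).1 (hRΘ j) x) (hβ j).le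
  calc |_ - _| ≤ |∑ i, α i * (Metric.infDist x (Ω i) - dist x 0)|
        + |∑ j, β j * (Metric.infDist x (Θ j) - dist x 0)| := abs_sub _ _
    _ ≤ ∑ i, α i * RΩ i + ∑ j, β j * RΘ j + 1 := by linarith
end

section
/- Let Ω_1 ⊂ S be nonempty closed convex sets in R^n, let Θ_1,...,Θ_q be nonempty closed convex sets, β_j > 0, and α_1 = Σ_j β_j. If x̄ ∈ Ω_1 maximizes h(x) = Σ_j β_j d(x; Θ_j) over Ω_1, then x̄ minimizes f(x) = α_1 d(x; Ω_1) − Σ_j β_j d(x; Θ_j) over S. -/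
theorem max_over_omega_solves_problem (n q : ℕ)
    (S Ω₁ : Set (EuclideanSpace ℝ (Fin n)))
    (hΩ₁ : Ω₁.Nonempty) (hΩ₁c : IsClosed Ω₁) (hΩ₁conv : Convex ℝ Ω₁)
    (hΩS : Ω₁ ⊆ S)
    (hS : S.Nonempty) (hSc : IsClosed S) (hSconv : Convex ℝ S)
    (Θ : Fin q → Set (EuclideanSpace ℝ (Fin n)))
    (hΘ : ∀ j, (Θ j).Nonempty ∧ IsClosed (Θ j) ∧ Convex ℝ (Θ j))
    (β : Fin q → ℝ) (hβ : ∀ j, 0 < β j)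
    (α₁ : ℝ) (hα₁ : α₁ = ∑ j, β j)
    (f h : EuclideanSpace ℝ (Fin n) → ℝ)
    (hh : ∀ x, h x = ∑ j, β j * Metric.infDist x (Θ j))
    (hf : ∀ x, f x = α₁ * Metric.infDist x Ω₁
                    - ∑ j, β j * Metric.infDist x (Θ j))
    (xb : EuclideanSpace ℝ (Fin n)) (hxb : xb ∈ Ω₁)
    (hmax : ∀ x ∈ Ω₁, h x ≤ h xb) :
    ∀ x ∈ S, f xb ≤ f x := by
  intro x hx
  obtain ⟨p, hp, hpd⟩ := hΩ₁c.exists_infDist_eq_dist hΩ₁ x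
  have hxb0 : Metric.infDist xb Ω₁ = 0 := Metric.infDist_zero_of_mem hxb
  have key : ∑ j, β j * Metric.infDist x (Θ j)
      ≤ α₁ * Metric.infDist x Ω₁ + h xb := by
    have h1 : ∑ j, β j * Metric.infDist x (Θ j)
        ≤ ∑ j, β j * (dist x p + Metric.infDist p (Θ j)) := by
      apply Finset.sum_le_sum
      intro j _
      have := Metric.infDist_le_infDist_add_dist (x := x) (y := p) (s := Θ j)
      nlinarith [(hβ j).le]
    have h2 : ∑ j, β j * (dist x p + Metric.infDist p (Θ j))
        = α₁ * dist x p + h p := by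
      rw [hh, hα₁, Finset.sum_mul]
      rw [← Finset.sum_add_distrib]
      congr 1
      ext j
      ring
    have h3 : h p ≤ h xb := hmax p hp
    rw [hpd]
    linarith
  have hb := hh xb
  rw [hf, hf, hxb0]
  linarith
end

section
/- Consider f(x) = Σ_{i=1}^p α_i d(x; Ω_i) − Σ_{j=1}^q β_j d(x; Θ_j) over a nonempty closed convex set S ⊂ R^n, where all Ω_i, Θ_j are nonempty closed convex, all weights positive, Ω_{i0} ⊂ S for some index i0, and α_{i0} > Σ_{i≠i0} α_i + Σ_j β_j. Then for every x ∈ S \ Ω_{i0} one has f(x) > f(P(x; Ω_{i0})); in particular every minimizer of f over S belongs to Ω_{i0}. -/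
open Classical in
noncomputable def proj (n : ℕ) (Q : Set (EuclideanSpace ℝ (Fin n)))
    (x : EuclideanSpace ℝ (Fin n)) : EuclideanSpace ℝ (Fin n) :=
  if h : ∃ p ∈ Q, dist x p = Metric.infDist x Q then h.choose else x

lemma proj_spec (n : ℕ) (Q : Set (EuclideanSpace ℝ (Fin n))) (hQ : Q.Nonempty)
    (hc : IsClosed Q) (x : EuclideanSpace ℝ (Fin n)) :
    proj n Q x ∈ Q ∧ dist x (proj n Q x) = Metric.infDist x Q := by
  obtain ⟨y, hy, hdy⟩ := hc.exists_infDist_eq_dist hQ x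
  have hex : ∃ p ∈ Q, dist x p = Metric.infDist x Q := ⟨y, hy, hdy.symm⟩
  rw [proj, dif_pos hex]
  exact hex.choose_spec

theorem majority_theorem (n p q : ℕ)
    (S : Set (EuclideanSpace ℝ (Fin n)))
    (hS : S.Nonempty) (hSc : IsClosed S) (hSconv : Convex ℝ S)
    (Ω : Fin p → Set (EuclideanSpace ℝ (Fin n)))
    (Θ : Fin q → Set (EuclideanSpace ℝ (Fin n)))
    (hΩ : ∀ i, (Ω i).Nonempty ∧ IsClosed (Ω i) ∧ Convex ℝ (Ω i))
    (hΘ : ∀ j, (Θ j).Nonempty ∧ IsClosed (Θ j) ∧ Convex ℝ (Θ j))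
    (α : Fin p → ℝ) (β : Fin q → ℝ)
    (hα : ∀ i, 0 < α i) (hβ : ∀ j, 0 < β j)
    (i0 : Fin p) (hsub : Ω i0 ⊆ S)
    (hmaj : ∑ i ∈ Finset.univ.erase i0, α i + ∑ j, β j < α i0)
    (f : EuclideanSpace ℝ (Fin n) → ℝ)
    (hf : ∀ x, f x = ∑ i, α i * Metric.infDist x (Ω i)
                    - ∑ j, β j * Metric.infDist x (Θ j)) :
    (∀ x ∈ S, x ∉ Ω i0 → f (proj n (Ω i0) x) < f x) ∧
    (∀ xb ∈ S, (∀ x ∈ S, f xb ≤ f x) → xb ∈ Ω i0) := by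
  obtain ⟨hΩ0ne, hΩ0c, -⟩ := hΩ i0
  have hmain : ∀ x ∈ S, x ∉ Ω i0 → f (proj n (Ω i0) x) < f x := by
    intro x hxS hx
    obtain ⟨hPmem, hPdist⟩ := proj_spec n (Ω i0) hΩ0ne hΩ0c x
    set P := proj n (Ω i0) x with hPdef
    set d := Metric.infDist x (Ω i0) with hdd
    have hdpos : 0 < d := by
      rcases lt_or_eq_of_le (Metric.infDist_nonneg (s := Ω i0) (x := x)) with h | h
      · exact h
      · exact absurd ((hΩ0c.mem_iff_infDist_zero hΩ0ne).2 h.symm) hx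
    have hub : ∀ Q : Set (EuclideanSpace ℝ (Fin n)),
        Metric.infDist P Q ≤ Metric.infDist x Q + d := by
      intro Q
      have := Metric.infDist_le_infDist_add_dist (x := P) (y := x) (s := Q)
      rwa [dist_comm, hPdist] at this
    have hlb : ∀ Q : Set (EuclideanSpace ℝ (Fin n)),
        Metric.infDist x Q ≤ Metric.infDist P Q + d := by
      intro Q
      have := Metric.infDist_le_infDist_add_dist (x := x) (y := P) (s := Q)
      rwa [hPdist] at this
    have hP0 : Metric.infDist P (Ω i0) = 0 := Metric.infDist_zero_of_mem hPmem
    set A := ∑ i ∈ Finset.univ.erase i0, α i * Metric.infDist x (Ω i) with hA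
    set B := ∑ j, β j * Metric.infDist x (Θ j) with hB
    set Sa := ∑ i ∈ Finset.univ.erase i0, α i with hSa
    set Sb := ∑ j, β j with hSb
    have hfx : f x = α i0 * d + A - B := by
      rw [hf x, ← Finset.sum_erase_add _ _ (Finset.mem_univ i0)]
      ring
    have h1 : ∑ i, α i * Metric.infDist P (Ω i) ≤ A + Sa * d := by
      rw [← Finset.sum_erase_add _ _ (Finset.mem_univ i0), hP0, mul_zero, add_zero,
        hA, hSa, Finset.sum_mul, ← Finset.sum_add_distrib]
      refine Finset.sum_le_sum fun i _ => ?_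
      have := hub (Ω i)
      nlinarith [(hα i).le]
    have h2 : B - Sb * d ≤ ∑ j, β j * Metric.infDist P (Θ j) := by
      rw [hB, hSb, Finset.sum_mul, ← Finset.sum_sub_distrib]
      refine Finset.sum_le_sum fun j _ => ?_
      have := hlb (Θ j)
      nlinarith [(hβ j).le]
    have hfP : f P ≤ A + Sa * d - (B - Sb * d) := by
      rw [hf P]; linarith
    rw [hfx]
    nlinarith
  refine ⟨hmain, fun xb hxb hmin => ?_⟩
  by_contra h
  have hlt := hmain xb hxb h
  have hPS : proj n (Ω i0) xb ∈ S := hsub (proj_spec n (Ω i0) hΩ0ne hΩ0c xb).1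
  exact absurd (hmin _ hPS) (not_le.2 hlt)
end

section
/- Let a_1,...,a_p, b_1,...,b_q ∈ R^n with positive weights α_i, β_j satisfying Σ_i α_i = Σ_j β_j, and let f(x) = Σ_i α_i ‖x − a_i‖ − Σ_j β_j ‖x − b_j‖. If w := Σ_i α_i a_i − Σ_j β_j b_j ≠ 0, then liminf_{‖x‖→∞} f(x) = −‖w‖; in particular f(x) ≥ −‖w‖ − C/‖x‖ for some constant C and all large ‖x‖, and f(kw) → −‖w‖ as k → ∞. -/
open Filter

lemma key_lower {E : Type*} [NormedAddCommGroup E] [InnerProductSpace ℝ E] (x a : E) :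
    ‖x‖ ^ 2 - inner ℝ a x ≤ ‖x‖ * ‖x - a‖ := by
  have h1 : (inner ℝ (x - a) x : ℝ) ≤ ‖x - a‖ * ‖x‖ := real_inner_le_norm _ _
  have h2 : (inner ℝ (x - a) x : ℝ) = ‖x‖ ^ 2 - inner ℝ a x := by
    rw [inner_sub_left, real_inner_self_eq_norm_sq]
  linarith [h1, h2.symm.le]

lemma key_upper {E : Type*} [NormedAddCommGroup E] [InnerProductSpace ℝ E] (x a : E) :
    ‖x‖ * ‖x - a‖ ≤ ‖x‖ ^ 2 - inner ℝ a x + ‖a‖ ^ 2 / 2 := by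
  have h1 : ‖x - a‖ ^ 2 = ‖x‖ ^ 2 - 2 * inner ℝ a x + ‖a‖ ^ 2 := by
    rw [norm_sub_sq_real]; ring_nf; rw [real_inner_comm]; ring
  have h2 : (inner ℝ a x : ℝ) ≤ ‖a‖ * ‖x‖ := real_inner_le_norm _ _
  have h3 : 0 ≤ ‖x‖ := norm_nonneg _
  have h4 : 0 ≤ ‖x - a‖ := norm_nonneg _
  have h5 : 0 ≤ ‖a‖ := norm_nonneg _
  nlinarith [sq_nonneg ((inner ℝ a x : ℝ) - ‖a‖ ^ 2 / 2), sq_nonneg (‖x‖ - ‖a‖),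
    sq_nonneg (‖x‖ * ‖x - a‖ - (‖x‖ ^ 2 - inner ℝ a x + ‖a‖ ^ 2 / 2))]

lemma aux1 {t F c d : ℝ} (ht : 0 < t) (h : c * t - d ≤ t * F) : c - d / t ≤ F := by
  have hd : d / t * t = d := div_mul_cancel₀ _ ht.ne'
  have h2 : (c - d / t) * t ≤ F * t := by linarith [h]
  exact le_of_mul_le_mul_right h2 ht

lemma aux2 {t F c d : ℝ} (ht : 0 < t) (h : t * F ≤ c * t + d) : F ≤ c + d / t := by
  have hd : d / t * t = d := div_mul_cancel₀ _ ht.ne'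
  have h2 : F * t ≤ (c + d / t) * t := by linarith [h]
  exact le_of_mul_le_mul_right h2 ht

theorem liminf_eq_neg_norm_w (n p q : ℕ)
    (a : Fin p → EuclideanSpace ℝ (Fin n)) (b : Fin q → EuclideanSpace ℝ (Fin n))
    (α : Fin p → ℝ) (β : Fin q → ℝ)
    (hα : ∀ i, 0 < α i) (hβ : ∀ j, 0 < β j)
    (hsum : ∑ i, α i = ∑ j, β j)
    (f : EuclideanSpace ℝ (Fin n) → ℝ)
    (hf : ∀ x, f x = ∑ i, α i * ‖x - a i‖ - ∑ j, β j * ‖x - b j‖)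
    (w : EuclideanSpace ℝ (Fin n))
    (hw : w = ∑ i, α i • a i - ∑ j, β j • b j) (hwne : w ≠ 0) :
    Filter.liminf f
        (Filter.comap (fun x : EuclideanSpace ℝ (Fin n) => ‖x‖) Filter.atTop)
      = -‖w‖ ∧
    (∃ C : ℝ, ∃ R : ℝ, ∀ x, R ≤ ‖x‖ → -‖w‖ - C / ‖x‖ ≤ f x) ∧
    Filter.Tendsto (fun k : ℕ => f ((k : ℝ) • w)) Filter.atTop (nhds (-‖w‖)) := by
  have hw0 : 0 < ‖w‖ := norm_pos_iff.2 hwne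
  set Ca : ℝ := (∑ i, α i * ‖a i‖ ^ 2) / 2 with hCa
  set Cb : ℝ := (∑ j, β j * ‖b j‖ ^ 2) / 2 with hCb
  have hCb0 : 0 ≤ Cb := by
    apply div_nonneg _ (by norm_num)
    exact Finset.sum_nonneg fun j _ => mul_nonneg (hβ j).le (sq_nonneg _)
  -- inner product of w with x
  have hinner : ∀ x : EuclideanSpace ℝ (Fin n),
      (inner ℝ w x : ℝ) = ∑ i, α i * inner ℝ (a i) x - ∑ j, β j * inner ℝ (b j) x := by
    intro x
    rw [hw, inner_sub_left, sum_inner, sum_inner]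
    simp_rw [real_inner_smul_left]
  -- key two-sided estimate
  have key : ∀ x : EuclideanSpace ℝ (Fin n),
      -(inner ℝ w x : ℝ) - Cb ≤ ‖x‖ * f x ∧ ‖x‖ * f x ≤ -(inner ℝ w x : ℝ) + Ca := by
    intro x
    have hfx : ‖x‖ * f x
        = ∑ i, α i * (‖x‖ * ‖x - a i‖) - ∑ j, β j * (‖x‖ * ‖x - b j‖) := by
      rw [hf, mul_sub, Finset.mul_sum, Finset.mul_sum]
      simp_rw [mul_left_comm]
    have hA1 : ∑ i, α i * (‖x‖ ^ 2 - inner ℝ (a i) x) ≤ ∑ i, α i * (‖x‖ * ‖x - a i‖) :=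
      Finset.sum_le_sum fun i _ => mul_le_mul_of_nonneg_left (key_lower x (a i)) (hα i).le
    have hA2 : ∑ i, α i * (‖x‖ * ‖x - a i‖)
        ≤ ∑ i, α i * (‖x‖ ^ 2 - inner ℝ (a i) x + ‖a i‖ ^ 2 / 2) :=
      Finset.sum_le_sum fun i _ => mul_le_mul_of_nonneg_left (key_upper x (a i)) (hα i).le
    have hB1 : ∑ j, β j * (‖x‖ ^ 2 - inner ℝ (b j) x) ≤ ∑ j, β j * (‖x‖ * ‖x - b j‖) :=
      Finset.sum_le_sum fun j _ => mul_le_mul_of_nonneg_left (key_lower x (b j)) (hβ j).le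
    have hB2 : ∑ j, β j * (‖x‖ * ‖x - b j‖)
        ≤ ∑ j, β j * (‖x‖ ^ 2 - inner ℝ (b j) x + ‖b j‖ ^ 2 / 2) :=
      Finset.sum_le_sum fun j _ => mul_le_mul_of_nonneg_left (key_upper x (b j)) (hβ j).le
    have eA1 : ∑ i, α i * (‖x‖ ^ 2 - inner ℝ (a i) x)
        = (∑ i, α i) * ‖x‖ ^ 2 - ∑ i, α i * inner ℝ (a i) x := by
      simp [mul_sub, Finset.sum_sub_distrib, Finset.sum_mul]
    have eA2 : ∑ i, α i * (‖x‖ ^ 2 - inner ℝ (a i) x + ‖a i‖ ^ 2 / 2)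
        = (∑ i, α i) * ‖x‖ ^ 2 - ∑ i, α i * inner ℝ (a i) x + Ca := by
      simp only [mul_add, mul_sub, Finset.sum_add_distrib, Finset.sum_sub_distrib,
        Finset.sum_mul, hCa, Finset.sum_div, mul_div_assoc]
    have eB1 : ∑ j, β j * (‖x‖ ^ 2 - inner ℝ (b j) x)
        = (∑ j, β j) * ‖x‖ ^ 2 - ∑ j, β j * inner ℝ (b j) x := by
      simp [mul_sub, Finset.sum_sub_distrib, Finset.sum_mul]
    have eB2 : ∑ j, β j * (‖x‖ ^ 2 - inner ℝ (b j) x + ‖b j‖ ^ 2 / 2)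
        = (∑ j, β j) * ‖x‖ ^ 2 - ∑ j, β j * inner ℝ (b j) x + Cb := by
      simp only [mul_add, mul_sub, Finset.sum_add_distrib, Finset.sum_sub_distrib,
        Finset.sum_mul, hCb, Finset.sum_div, mul_div_assoc]
    have hsum2 : (∑ i, α i) * ‖x‖ ^ 2 = (∑ j, β j) * ‖x‖ ^ 2 := by rw [hsum]
    constructor
    · rw [hfx, hinner x]
      linarith [hA1, hB2, eA1, eB2, hsum2]
    · rw [hfx, hinner x]
      linarith [hA2, hB1, eA2, eB1, hsum2]
  -- Part 2 : lower bound for all x with ‖x‖ ≥ 1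
  have part2 : ∀ x : EuclideanSpace ℝ (Fin n), 1 ≤ ‖x‖ → -‖w‖ - Cb / ‖x‖ ≤ f x := by
    intro x hx
    have ht : (0:ℝ) < ‖x‖ := lt_of_lt_of_le one_pos hx
    have hiw : -(‖w‖ * ‖x‖) ≤ -(inner ℝ w x : ℝ) := by
      have := real_inner_le_norm w x
      linarith
    exact aux1 ht (by nlinarith [(key x).1, hiw])
  -- Part 3 : convergence along multiples of w
  have hnorm : ∀ k : ℕ, ‖(k : ℝ) • w‖ = (k : ℝ) * ‖w‖ := by
    intro k
    rw [norm_smul, Real.norm_natCast]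
  have hin : ∀ k : ℕ, (inner ℝ w ((k : ℝ) • w) : ℝ) = (k : ℝ) * ‖w‖ ^ 2 := by
    intro k
    rw [real_inner_smul_right, real_inner_self_eq_norm_sq]
  have hbound3 : ∀ k : ℕ, 1 ≤ k →
      -‖w‖ - Cb / ((k : ℝ) * ‖w‖) ≤ f ((k : ℝ) • w) ∧
      f ((k : ℝ) • w) ≤ -‖w‖ + Ca / ((k : ℝ) * ‖w‖) := by
    intro k hk
    have hk1 : (1:ℝ) ≤ (k : ℝ) := by exact_mod_cast hk
    have ht : (0:ℝ) < (k : ℝ) * ‖w‖ := mul_pos (by linarith) hw0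
    have h := key ((k : ℝ) • w)
    rw [hnorm k, hin k] at h
    constructor
    · exact aux1 ht (by nlinarith [h.1])
    · exact aux2 ht (by nlinarith [h.2])
  have htend0 : ∀ c : ℝ, Tendsto (fun k : ℕ => c / ((k : ℝ) * ‖w‖)) atTop (nhds 0) :=
    fun c => Tendsto.div_atTop tendsto_const_nhds
      (tendsto_natCast_atTop_atTop.atTop_mul_const hw0)
  have part3 : Tendsto (fun k : ℕ => f ((k : ℝ) • w)) atTop (nhds (-‖w‖)) := by
    apply tendsto_of_tendsto_of_tendsto_of_le_of_le'
      (g := fun k : ℕ => -‖w‖ - Cb / ((k : ℝ) * ‖w‖))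
      (h := fun k : ℕ => -‖w‖ + Ca / ((k : ℝ) * ‖w‖))
    · simpa using tendsto_const_nhds.sub (htend0 Cb)
    · simpa using tendsto_const_nhds.add (htend0 Ca)
    · filter_upwards [eventually_ge_atTop 1] with k hk
      exact (hbound3 k hk).1
    · filter_upwards [eventually_ge_atTop 1] with k hk
      exact (hbound3 k hk).2
  -- the comap filter
  set F := Filter.comap (fun x : EuclideanSpace ℝ (Fin n) => ‖x‖) Filter.atTop with hF
  have hF_ev : ∀ R : ℝ, ∀ᶠ x in F, R ≤ ‖x‖ := by
    intro R
    rw [hF, eventually_comap]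
    filter_upwards [eventually_ge_atTop R] with t ht x hx
    rw [hx]; exact ht
  have htend_g : Tendsto (fun k : ℕ => (k : ℝ) • w) atTop F := by
    rw [hF, tendsto_comap_iff]
    have : ((fun x : EuclideanSpace ℝ (Fin n) => ‖x‖) ∘ fun k : ℕ => (k : ℝ) • w)
        = fun k : ℕ => (k : ℝ) * ‖w‖ := by
      funext k; exact hnorm k
    rw [this]
    exact tendsto_natCast_atTop_atTop.atTop_mul_const hw0
  have hfreq : ∀ ε : ℝ, 0 < ε → ∃ᶠ x in F, f x ≤ -‖w‖ + ε := by
    intro ε hε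
    apply htend_g.frequently
    apply Eventually.frequently
    filter_upwards [part3.eventually_le_const (lt_add_of_pos_right _ hε)] with k hk
    exact hk
  have hbdd : IsBoundedUnder (· ≥ ·) F f := by
    refine ⟨-‖w‖ - Cb, eventually_map.2 ?_⟩
    filter_upwards [hF_ev 1] with x hx
    have h1 := part2 x hx
    have h2 : Cb / ‖x‖ ≤ Cb := div_le_self hCb0 hx
    simp only [ge_iff_le]
    linarith
  have hcobdd : IsCoboundedUnder (· ≥ ·) F f :=
    IsCoboundedUnder.of_frequently_le (hfreq 1 one_pos)
  have part1 : Filter.liminf f F = -‖w‖ := by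
    apply le_antisymm
    · apply le_of_forall_pos_le_add
      intro ε hε
      have := liminf_le_of_frequently_le (hfreq ε hε) hbdd
      linarith
    · apply le_of_forall_pos_le_add
      intro ε hε
      have hev : ∀ᶠ x in F, -‖w‖ - ε ≤ f x := by
        filter_upwards [hF_ev (max 1 (Cb / ε))] with x hx
        have hx1 : 1 ≤ ‖x‖ := le_trans (le_max_left _ _) hx
        have hx2 : Cb / ε ≤ ‖x‖ := le_trans (le_max_right _ _) hx
        have ht : (0:ℝ) < ‖x‖ := lt_of_lt_of_le one_pos hx1
        have h2 : Cb / ‖x‖ ≤ ε := by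
          rw [div_le_iff₀ ht]
          calc Cb = Cb / ε * ε := by field_simp
          _ ≤ ‖x‖ * ε := by nlinarith
          _ = ε * ‖x‖ := mul_comm _ _
        have := part2 x hx1
        linarith
      have := le_liminf_of_le hcobdd hev
      linarith
  exact ⟨part1, ⟨Cb, 1, part2⟩, part3⟩
end

section
/- Let p ≥ 2, points a_1,...,a_p, b ∈ R^n with {a_i − b : i = 1,...,p} linearly independent, positive weights α_1,...,α_p and β = Σ_i α_i. Then the function f(x) = Σ_i α_i ‖x − a_i‖ − β ‖x − b‖ satisfies f(x) > −‖Σ_i α_i a_i − β b‖ for all x ∈ R^n, while inf_x f(x) = −‖Σ_i α_i a_i − β b‖; hence f has no global minimizer. -/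
open Finset RealInnerProductSpace

variable {E : Type*} [NormedAddCommGroup E] [InnerProductSpace ℝ E]

-- key quadratic bound: ‖t•u - w‖ ≤ t - ⟪u,w⟫ + ‖w‖²/(2t)
lemma sqrt_bound (u w : E) (hu : ‖u‖ = 1) (t : ℝ) (ht : 0 < t) (hw : ‖w‖ ≤ t) :
    ‖t • u - w‖ ≤ t - ⟪u, w⟫ + ‖w‖ ^ 2 / (2 * t) := by
  have hq : ⟪u, w⟫ ≤ ‖w‖ := by simpa [hu] using real_inner_le_norm u w
  have hsq : ‖t • u - w‖ ^ 2 = t ^ 2 - 2 * t * ⟪u, w⟫ + ‖w‖ ^ 2 := by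
    rw [@norm_sub_sq_real]
    rw [norm_smul, real_inner_smul_left]
    simp [hu, abs_of_pos ht]
    ring
  have hr : ‖w‖ ^ 2 / (2 * t) * (2 * t) = ‖w‖ ^ 2 :=
    div_mul_cancel₀ _ (by positivity)
  have hr0 : 0 ≤ ‖w‖ ^ 2 / (2 * t) := by positivity
  have hR : 0 ≤ t - ⟪u, w⟫ + ‖w‖ ^ 2 / (2 * t) := by linarith
  nlinarith [norm_nonneg (t • u - w), sq_nonneg (⟪u, w⟫ - ‖w‖ ^ 2 / (2 * t)), hsq, hr]

theorem no_global_minimizer (n p : ℕ) (hp : 2 ≤ p)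
    (a : Fin p → EuclideanSpace ℝ (Fin n)) (b : EuclideanSpace ℝ (Fin n))
    (hli : LinearIndependent ℝ (fun i : Fin p => a i - b))
    (α : Fin p → ℝ) (hα : ∀ i, 0 < α i)
    (β : ℝ) (hβ : β = ∑ i, α i)
    (f : EuclideanSpace ℝ (Fin n) → ℝ)
    (hf : ∀ x, f x = ∑ i, α i * ‖x - a i‖ - β * ‖x - b‖) :
    (∀ x, -‖∑ i, α i • a i - β • b‖ < f x) ∧
    IsGLB (Set.range f) (-‖∑ i, α i • a i - β • b‖) ∧
    ¬∃ xb, ∀ x, f xb ≤ f x := by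
  set c : EuclideanSpace ℝ (Fin n) := ∑ i, α i • a i - β • b with hcdef
  have hc : c = ∑ i, α i • (a i - b) := by
    rw [hcdef, hβ]
    simp [smul_sub, Finset.sum_sub_distrib, Finset.sum_smul]
  have hcne : c ≠ 0 := by
    intro h
    rw [hc] at h
    have := Fintype.linearIndependent_iff.mp hli α h ⟨0, by omega⟩
    exact (hα _).ne' this
  have hcpos : 0 < ‖c‖ := norm_pos_iff.mpr hcne
  -- strict lower bound
  have h1 : ∀ x, -‖c‖ < f x := by
    intro x
    rw [hf]
    by_cases hx : x = b
    · subst hx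
      have hnorm : ‖c‖ ≤ ∑ i, α i * ‖x - a i‖ := by
        rw [hc]
        refine (norm_sum_le _ _).trans (le_of_eq ?_)
        refine Finset.sum_congr rfl fun i _ => ?_
        rw [norm_smul, Real.norm_eq_abs, abs_of_pos (hα i), norm_sub_rev]
      simp only [sub_self, norm_zero, mul_zero, sub_zero]
      linarith
    · set t : ℝ := ‖x - b‖ with htdef
      have ht : 0 < t := by
        rw [htdef]
        exact norm_pos_iff.mpr (sub_ne_zero.mpr hx)
      set v : EuclideanSpace ℝ (Fin n) := t⁻¹ • (x - b) with hvdef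
      have hv : ‖v‖ = 1 := by
        rw [hvdef, norm_smul, Real.norm_eq_abs, abs_of_pos (inv_pos.mpr ht), ← htdef,
          inv_mul_cancel₀ ht.ne']
      have hxb : x - b = t • v := by
        rw [hvdef, smul_smul, mul_inv_cancel₀ ht.ne', one_smul]
      have hle : ∀ i, ⟪v, x - a i⟫ ≤ ‖x - a i‖ := fun i => by
        simpa [hv] using real_inner_le_norm v (x - a i)
      have hstrict : ∃ i, ⟪v, x - a i⟫ < ‖x - a i‖ := by
        by_contra h
        push_neg at h
        have heq : ∀ i, x - a i = ‖x - a i‖ • v := by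
          intro i
          have h1 : ⟪v, x - a i⟫ = ‖v‖ * ‖x - a i‖ := by
            rw [hv, one_mul]
            exact le_antisymm (hle i) (h i)
          have := inner_eq_norm_mul_iff_real.mp h1
          rw [hv, one_smul] at this
          exact this.symm
        have hkey : ∀ i, a i - b = (t - ‖x - a i‖) • v := by
          intro i
          have h4 : a i - b = (x - b) - (x - a i) := by abel
          conv_lhs => rw [h4, hxb, heq i, ← sub_smul]
        set i0 : Fin p := ⟨0, by omega⟩
        set i1 : Fin p := ⟨1, by omega⟩
        have hne : i0 ≠ i1 := by simp [i0, i1, Fin.ext_iff]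
        set g : Fin p → ℝ := fun j =>
          if j = i0 then (t - ‖x - a i1‖) else if j = i1 then -(t - ‖x - a i0‖) else 0
          with hgdef
        have hg0 : g i0 = t - ‖x - a i1‖ := by rw [hgdef]; simp
        have hg1 : g i1 = -(t - ‖x - a i0‖) := by
          rw [hgdef]
          simp [Ne.symm hne]
        have hgsum : ∑ j, g j • (a j - b) = 0 := by
          rw [← Finset.sum_subset (Finset.subset_univ {i0, i1})
            (fun j _ hj => by
              have hj0 : j ≠ i0 := fun h => hj (by simp [h])
              have hj1 : j ≠ i1 := fun h => hj (by simp [h])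
              rw [hgdef]
              simp [hj0, hj1]),
            Finset.sum_pair hne, hg0, hg1, hkey i0, hkey i1]
          module
        have hall := Fintype.linearIndependent_iff.mp hli g hgsum
        have hr0 : t - ‖x - a i1‖ = 0 := by rw [← hg0]; exact hall i0
        have hzero : a i1 - b = 0 := by
          rw [hkey i1, hr0, zero_smul]
        exact hli.ne_zero i1 hzero
      obtain ⟨j, hj⟩ := hstrict
      have hsumlt : ∑ i, α i * ⟪v, x - a i⟫ < ∑ i, α i * ‖x - a i‖ := by
        refine Finset.sum_lt_sum (fun i _ => mul_le_mul_of_nonneg_left (hle i) (hα i).le)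
          ⟨j, Finset.mem_univ j, mul_lt_mul_of_pos_left hj (hα j)⟩
      have hsumeq : ∑ i, α i * ⟪v, x - a i⟫ = β * t - ⟪v, c⟫ := by
        have h1 : ∑ i, α i * ⟪v, x - a i⟫ = ⟪v, ∑ i, α i • (x - a i)⟫ := by
          rw [inner_sum]
          exact Finset.sum_congr rfl fun i _ => (real_inner_smul_right v _ _).symm
        have h2 : ∑ i, α i • (x - a i) = β • (x - b) - c := by
          rw [hc, hβ]
          simp [smul_sub, Finset.sum_sub_distrib, Finset.sum_smul]
        have h3 : ⟪v, x - b⟫ = t := by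
          rw [hvdef, real_inner_smul_left, real_inner_self_eq_norm_sq, ← htdef]
          field_simp
        rw [h1, h2, inner_sub_right, real_inner_smul_right, h3]
      have hinner : ⟪v, c⟫ ≤ ‖c‖ := by
        simpa [hv] using real_inner_le_norm v c
      rw [htdef] at hsumeq
      linarith
  -- approach infimum
  have hub : ∀ ε > 0, ∃ x, f x ≤ -‖c‖ + ε := by
    intro ε hε
    set u : EuclideanSpace ℝ (Fin n) := ‖c‖⁻¹ • c with hudef
    have hu : ‖u‖ = 1 := by
      rw [hudef, norm_smul, Real.norm_eq_abs, abs_of_pos (inv_pos.mpr hcpos),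
        inv_mul_cancel₀ hcpos.ne']
    have huc : ⟪u, c⟫ = ‖c‖ := by
      rw [hudef, real_inner_smul_left, real_inner_self_eq_norm_sq]
      field_simp
    set K : ℝ := ∑ i, α i * ‖a i - b‖ ^ 2 with hKdef
    have hK0 : 0 ≤ K :=
      Finset.sum_nonneg fun i _ => mul_nonneg (hα i).le (sq_nonneg _)
    set S : ℝ := ∑ i, ‖a i - b‖ with hSdef
    have hS0 : 0 ≤ S := Finset.sum_nonneg fun i _ => norm_nonneg _
    set t : ℝ := max (S + 1) (K / (2 * ε) + 1) with htdef
    have ht1 : S + 1 ≤ t := le_max_left _ _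
    have ht2 : K / (2 * ε) + 1 ≤ t := le_max_right _ _
    have ht : 0 < t := by linarith
    have htw : ∀ i, ‖a i - b‖ ≤ t := by
      intro i
      have h7 := Finset.single_le_sum (f := fun i => ‖a i - b‖)
        (fun i _ => norm_nonneg _) (Finset.mem_univ i)
      rw [← hSdef] at h7
      linarith
    refine ⟨b + t • u, ?_⟩
    rw [hf]
    have hxa : ∀ i, b + t • u - a i = t • u - (a i - b) := fun i => by abel
    have hnb : ‖b + t • u - b‖ = t := by
      have h8 : b + t • u - b = t • u := by abel
      rw [h8, norm_smul, Real.norm_eq_abs, abs_of_pos ht, hu, mul_one]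
    have hterm : ∀ i, α i * ‖b + t • u - a i‖ ≤
        α i * (t - ⟪u, a i - b⟫ + ‖a i - b‖ ^ 2 / (2 * t)) := by
      intro i
      refine mul_le_mul_of_nonneg_left ?_ (hα i).le
      rw [hxa i]
      exact sqrt_bound u (a i - b) hu t ht (htw i)
    have hsum : ∑ i, α i * (t - ⟪u, a i - b⟫ + ‖a i - b‖ ^ 2 / (2 * t)) =
        β * t - ‖c‖ + K / (2 * t) := by
      have e1 : ∑ i, α i * ⟪u, a i - b⟫ = ‖c‖ := by
        rw [← huc, hc, inner_sum]
        exact Finset.sum_congr rfl fun i _ => (real_inner_smul_right u _ _).symm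
      have e2 : ∑ i, α i * (‖a i - b‖ ^ 2 / (2 * t)) = K / (2 * t) := by
        rw [hKdef, Finset.sum_div]
        exact Finset.sum_congr rfl fun i _ => (mul_div_assoc _ _ _).symm
      have e3 : ∀ i ∈ Finset.univ, α i * (t - ⟪u, a i - b⟫ + ‖a i - b‖ ^ 2 / (2 * t)) =
          α i * t - α i * ⟪u, a i - b⟫ + α i * (‖a i - b‖ ^ 2 / (2 * t)) :=
        fun i _ => by ring
      rw [Finset.sum_congr rfl e3, Finset.sum_add_distrib, Finset.sum_sub_distrib,
        e1, e2, ← Finset.sum_mul, ← hβ]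
    have hKt : K / (2 * t) ≤ ε := by
      rw [div_le_iff₀ (by linarith : (0:ℝ) < 2 * t)]
      have hq : K / (2 * ε) * (2 * ε) = K := div_mul_cancel₀ _ (by positivity)
      nlinarith [hq, ht2, hε, hK0]
    have hsb := Finset.sum_le_sum fun i (_ : i ∈ Finset.univ) => hterm i
    rw [hsum] at hsb
    rw [hnb]
    linarith
  have hglb : IsGLB (Set.range f) (-‖c‖) := by
    constructor
    · rintro _ ⟨x, rfl⟩
      exact (h1 x).le
    · intro m hm
      refine le_of_forall_pos_le_add fun ε hε => ?_
      obtain ⟨x, hx⟩ := hub ε hε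
      exact (hm ⟨x, rfl⟩).trans hx
  refine ⟨h1, hglb, ?_⟩
  rintro ⟨xb, hxb⟩
  have : f xb ≤ -‖c‖ := hglb.2 fun _ ⟨x, hx⟩ => hx ▸ hxb x
  exact absurd (h1 xb) (not_lt.mpr this)
end

section
/- Let Ω, Θ be nonempty closed convex sets in R^n and α ≥ β > 0, with f(x) = α d(x; Ω) − β d(x; Θ). Then no point of Θ \ Ω is a local minimizer of f. -/
theorem no_local_min_in_theta_minus_omega (n : ℕ)
    (Ω Θ : Set (EuclideanSpace ℝ (Fin n)))
    (hΩ : Ω.Nonempty) (hΩc : IsClosed Ω) (hΩconv : Convex ℝ Ω)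
    (hΘ : Θ.Nonempty) (hΘc : IsClosed Θ) (hΘconv : Convex ℝ Θ)
    (α β : ℝ) (hβ : 0 < β) (hαβ : β ≤ α)
    (f : EuclideanSpace ℝ (Fin n) → ℝ)
    (hf : ∀ x, f x = α * Metric.infDist x Ω - β * Metric.infDist x Θ) :
    ∀ xb ∈ Θ \ Ω, ¬ IsLocalMin f xb := by
  rintro xb ⟨hxΘ, hxΩ⟩ hmin
  have hα : 0 < α := lt_of_lt_of_le hβ hαβ
  set d := Metric.infDist xb Ω with hd
  have hdpos : 0 < d := by
    rw [hd, ← hΩc.notMem_iff_infDist_pos hΩ]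
    exact hxΩ
  obtain ⟨w, hwΩ, hwd⟩ := hΩc.exists_infDist_eq_dist hΩ xb
  -- get a ball where f xb ≤ f x
  obtain ⟨ε, hε, hball⟩ := Metric.eventually_nhds_iff_ball.mp hmin
  -- choose small t
  set t : ℝ := min (ε / (2 * d)) (1 / 2) with ht
  have ht0 : 0 < t := lt_min (div_pos hε (by linarith)) (by norm_num)
  have ht1 : t < 1 := lt_of_le_of_lt (min_le_right _ _) (by norm_num)
  set x : EuclideanSpace ℝ (Fin n) := xb + t • (w - xb) with hx
  have hdxw : dist xb w = d := hwd.symm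
  have hdist : dist x xb = t * d := by
    rw [hx, dist_eq_norm]
    have : xb + t • (w - xb) - xb = t • (w - xb) := by abel
    rw [this, norm_smul, Real.norm_eq_abs, abs_of_pos ht0, ← dist_eq_norm']
    rw [hdxw]
  have hxball : x ∈ Metric.ball xb ε := by
    rw [Metric.mem_ball, hdist]
    have : t ≤ ε / (2 * d) := min_le_left _ _
    calc t * d ≤ (ε / (2 * d)) * d := by nlinarith
      _ = ε / 2 := by field_simp
      _ < ε := by linarith
  -- infDist x Ω ≤ (1 - t) * d
  have h1 : Metric.infDist x Ω ≤ (1 - t) * d := by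
    calc Metric.infDist x Ω ≤ dist x w := Metric.infDist_le_dist_of_mem hwΩ
      _ = (1 - t) * d := by
          rw [dist_eq_norm, hx]
          have : xb + t • (w - xb) - w = (1 - t) • (xb - w) := by
            module
          rw [this, norm_smul, Real.norm_eq_abs, abs_of_pos (by linarith),
            ← dist_eq_norm, hdxw]
  have h2 : 0 ≤ Metric.infDist x Θ := Metric.infDist_nonneg
  have hfxb : f xb = α * d := by
    rw [hf, Metric.infDist_zero_of_mem hxΘ, hd]; ring
  have hfx : f x ≤ α * (1 - t) * d := by
    rw [hf]
    have := mul_le_mul_of_nonneg_left h1 (le_of_lt hα)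
    nlinarith
  have := hball x hxball
  rw [hfxb] at this
  nlinarith [mul_pos (mul_pos hα ht0) hdpos]
end

section
/- Let Ω, Θ be nonempty closed convex sets in R^n and α > β > 0, with f(x) = α d(x; Ω) − β d(x; Θ). Then every local minimizer of f belongs to Ω. -/
theorem local_min_belongs_to_omega (n : ℕ)
    (Ω Θ : Set (EuclideanSpace ℝ (Fin n)))
    (hΩ : Ω.Nonempty) (hΩc : IsClosed Ω) (hΩconv : Convex ℝ Ω)
    (hΘ : Θ.Nonempty) (hΘc : IsClosed Θ) (hΘconv : Convex ℝ Θ)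
    (α β : ℝ) (hβ : 0 < β) (hαβ : β < α)
    (f : EuclideanSpace ℝ (Fin n) → ℝ)
    (hf : ∀ x, f x = α * Metric.infDist x Ω - β * Metric.infDist x Θ) :
    ∀ xb, IsLocalMin f xb → xb ∈ Ω := by
  intro xb hmin
  by_contra hx
  have hdpos : 0 < Metric.infDist xb Ω := (hΩc.notMem_iff_infDist_pos hΩ).mp hx
  obtain ⟨p, hp, hdp⟩ := hΩc.exists_infDist_eq_dist hΩ xb
  set d : ℝ := dist xb p with hd
  have hdpos' : 0 < d := hdp ▸ hdpos
  set g : ℝ → EuclideanSpace ℝ (Fin n) := fun t => xb + t • (p - xb) with hg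
  have hcont : Filter.Tendsto g (nhds 0) (nhds xb) := by
    have : Continuous g := by continuity
    have h0 : g 0 = xb := by simp [hg]
    simpa [h0] using this.tendsto 0
  have hev : ∀ᶠ t in nhdsWithin 0 (Set.Ioi 0), f xb ≤ f (g t) :=
    nhdsWithin_le_nhds (hcont.eventually hmin)
  have hev2 : ∀ᶠ t in nhdsWithin (0:ℝ) (Set.Ioi 0), 0 < t ∧ t < 1 := by
    filter_upwards [self_mem_nhdsWithin,
      nhdsWithin_le_nhds (Filter.Tendsto.eventually_lt_const one_pos Filter.tendsto_id)] with t h1 h2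
    exact ⟨h1, h2⟩
  obtain ⟨t, hft, ht0, ht1⟩ := (hev.and hev2).exists
  -- distance estimates
  have hgp : dist (g t) p = (1 - t) * d := by
    rw [hd, dist_eq_norm, dist_eq_norm]
    have : g t - p = (1 - t) • (xb - p) := by simp [hg]; module
    rw [this, norm_smul]
    simp [abs_of_nonneg (by linarith : (0:ℝ) ≤ 1 - t)]
  have hxg : dist xb (g t) = t * d := by
    rw [hd, dist_eq_norm, dist_eq_norm]
    have : xb - g t = t • (xb - p) := by simp [hg]; module
    rw [this, norm_smul]
    simp [abs_of_nonneg ht0.le]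
  have h1 : Metric.infDist (g t) Ω ≤ (1 - t) * d :=
    hgp ▸ Metric.infDist_le_dist_of_mem hp
  have h2 : Metric.infDist xb Θ ≤ Metric.infDist (g t) Θ + t * d :=
    hxg ▸ Metric.infDist_le_infDist_add_dist
  have hfgt : f (g t) ≤ f xb - (α - β) * (t * d) := by
    rw [hf, hf, hdp]
    nlinarith [Metric.infDist_nonneg (x := g t) (s := Θ)]
  nlinarith [mul_pos ht0 hdpos']
end

section
/- Let Ω, Θ be nonempty closed convex sets in R^n and α > β > 0. Then x̄ minimizes f(x) = α d(x; Ω) − β d(x; Θ) over R^n if and only if x̄ ∈ Ω and x̄ maximizes d(·; Θ) over Ω. In particular the solution set of the minimization problem is independent of the specific values of α and β as long as α > β > 0. -/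
theorem global_min_iff_max_dist (n : ℕ)
    (Ω Θ : Set (EuclideanSpace ℝ (Fin n)))
    (hΩ : Ω.Nonempty) (hΩc : IsClosed Ω) (hΩconv : Convex ℝ Ω)
    (hΘ : Θ.Nonempty) (hΘc : IsClosed Θ) (hΘconv : Convex ℝ Θ)
    (α β : ℝ) (hβ : 0 < β) (hαβ : β < α)
    (f : EuclideanSpace ℝ (Fin n) → ℝ)
    (hf : ∀ x, f x = α * Metric.infDist x Ω - β * Metric.infDist x Θ) :
    ∀ xb, (∀ x, f xb ≤ f x) ↔
      (xb ∈ Ω ∧ ∀ x ∈ Ω, Metric.infDist x Θ ≤ Metric.infDist xb Θ) := by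
  intro xb
  constructor
  · intro hmin
    have hd : Metric.infDist xb Ω = 0 := by
      obtain ⟨p, hpΩ, hp⟩ := hΩc.exists_infDist_eq_dist hΩ xb
      have h1 := hmin p
      rw [hf, hf, Metric.infDist_zero_of_mem hpΩ] at h1
      have h2 : Metric.infDist xb Θ ≤ Metric.infDist p Θ + dist xb p :=
        Metric.infDist_le_infDist_add_dist
      have hnn := Metric.infDist_nonneg (x := xb) (s := Ω)
      nlinarith [mul_le_mul_of_nonneg_left h2 hβ.le]
    have hmem : xb ∈ Ω := (hΩc.mem_iff_infDist_zero hΩ (x := xb)).2 hd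
    refine ⟨hmem, fun x hx => ?_⟩
    have h1 := hmin x
    rw [hf, hf, Metric.infDist_zero_of_mem hmem, Metric.infDist_zero_of_mem hx] at h1
    nlinarith
  · rintro ⟨hxb, hmax⟩ x
    rw [hf, hf, Metric.infDist_zero_of_mem hxb]
    obtain ⟨p, hpΩ, hp⟩ := hΩc.exists_infDist_eq_dist hΩ x
    have h2 : Metric.infDist x Θ ≤ Metric.infDist p Θ + dist x p :=
      Metric.infDist_le_infDist_add_dist
    have h3 := hmax p hpΩ
    have hnn := Metric.infDist_nonneg (x := x) (s := Ω)
    nlinarith [mul_le_mul_of_nonneg_left h2 hβ.le]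
end

section
/- Let Ω, Θ be nonempty closed convex sets in R^n and f(x) = d(x; Ω) − d(x; Θ). If ū ∈ Ω maximizes d(·; Θ) over Ω, then ū is a global minimizer of f over R^n. Conversely, if f has a global minimizer, then d(·; Θ) attains its maximum over Ω. -/
theorem equal_weights_min_max_relation (n : ℕ)
    (Ω Θ : Set (EuclideanSpace ℝ (Fin n)))
    (hΩ : Ω.Nonempty) (hΩc : IsClosed Ω) (hΩconv : Convex ℝ Ω)
    (hΘ : Θ.Nonempty) (hΘc : IsClosed Θ) (hΘconv : Convex ℝ Θ)
    (f : EuclideanSpace ℝ (Fin n) → ℝ)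
    (hf : ∀ x, f x = Metric.infDist x Ω - Metric.infDist x Θ) :
    (∀ ub ∈ Ω, (∀ x ∈ Ω, Metric.infDist x Θ ≤ Metric.infDist ub Θ) →
      ∀ x, f ub ≤ f x) ∧
    ((∃ xb, ∀ x, f xb ≤ f x) →
      ∃ ub ∈ Ω, ∀ x ∈ Ω, Metric.infDist x Θ ≤ Metric.infDist ub Θ) := by
  constructor
  · intro ub hub hmax x
    obtain ⟨p, hp, hpd⟩ := hΩc.exists_infDist_eq_dist hΩ x
    have h1 : Metric.infDist x Θ ≤ Metric.infDist p Θ + dist x p :=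
      Metric.infDist_le_infDist_add_dist
    have h2 : Metric.infDist p Θ ≤ Metric.infDist ub Θ := hmax p hp
    have h3 : Metric.infDist ub Ω = 0 := Metric.infDist_zero_of_mem hub
    rw [hf, hf, h3, hpd]
    linarith
  · rintro ⟨xb, hxb⟩
    obtain ⟨p, hp, hpd⟩ := hΩc.exists_infDist_eq_dist hΩ xb
    refine ⟨p, hp, fun x hx => ?_⟩
    have hfx := hxb x
    have hfp := hxb p
    have h1 : Metric.infDist xb Θ ≤ Metric.infDist p Θ + dist xb p :=
      Metric.infDist_le_infDist_add_dist
    have h3 : Metric.infDist x Ω = 0 := Metric.infDist_zero_of_mem hx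
    have h4 : Metric.infDist p Ω = 0 := Metric.infDist_zero_of_mem hp
    rw [hf, hf, h3] at hfx
    rw [hf xb, hf p, h4, hpd] at hfp
    -- hfp : dist xb p - infDist xb Θ ≤ 0 - infDist p Θ
    -- with h1 : infDist p Θ = -(f xb)
    linarith
end

section
/- Let Ω, Θ be nonempty closed convex sets in R^n with f(x) = d(x; Ω) − d(x; Θ). If f has a unique global minimizer, then Ω ⊂ Θ; moreover Ω must be a singleton {u} with u in the interior of Θ. (If u were a boundary point of Θ, taking any nonzero v ∈ N(u; Θ) gives f(u + tv) = 0 for all t ≥ 0, yielding a ray of minimizers.) -/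
set_option maxHeartbeats 1000000

open Metric Set
open scoped RealInnerProductSpace

private lemma proj_exists {E : Type*} [NormedAddCommGroup E] [InnerProductSpace ℝ E]
    [ProperSpace E] {S : Set E} (hc : IsClosed S) (hconv : Convex ℝ S) (hne : S.Nonempty)
    (x : E) :
    ∃ q ∈ S, dist x q = infDist x S ∧ ∀ z ∈ S, ⟪x - q, z - q⟫ ≤ 0 := by
  obtain ⟨q, hq, hdq⟩ := hc.exists_infDist_eq_dist hne x
  refine ⟨q, hq, hdq.symm, ?_⟩
  rw [← norm_eq_iInf_iff_real_inner_le_zero hconv hq]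
  simp only [← dist_eq_norm]
  rw [← infDist_eq_iInf]
  exact hdq.symm

private lemma le_infDist' {E : Type*} [MetricSpace E] {S : Set E} (hne : S.Nonempty)
    {x : E} {b : ℝ} (h : ∀ z ∈ S, b ≤ dist x z) : b ≤ infDist x S := by
  haveI : Nonempty ↥S := hne.to_subtype
  rw [infDist_eq_iInf]
  exact le_ciInf fun z => h z z.2

private lemma inner_le_dist_mul {E : Type*} [NormedAddCommGroup E] [InnerProductSpace ℝ E]
    (y z v : E) : ⟪y - z, v⟫ ≤ dist y z * ‖v‖ := by
  rw [dist_eq_norm]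
  exact real_inner_le_norm _ _

theorem unique_min_implies_singleton_interior (n : ℕ)
    (Ω Θ : Set (EuclideanSpace ℝ (Fin n)))
    (hΩ : Ω.Nonempty) (hΩc : IsClosed Ω) (hΩconv : Convex ℝ Ω)
    (hΘ : Θ.Nonempty) (hΘc : IsClosed Θ) (hΘconv : Convex ℝ Θ)
    (f : EuclideanSpace ℝ (Fin n) → ℝ)
    (hf : ∀ x, f x = Metric.infDist x Ω - Metric.infDist x Θ)
    (huniq : ∃ xb, (∀ x, f xb ≤ f x) ∧ ∀ y, (∀ x, f y ≤ f x) → y = xb) :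
    Ω ⊆ Θ ∧ ∃ u, Ω = {u} ∧ u ∈ interior Θ := by
  obtain ⟨xb, hmin, huni⟩ := huniq
  -- Step A : xb ∈ Ω
  have hxbΩ : xb ∈ Ω := by
    obtain ⟨p, hpΩ, hdp, -⟩ := proj_exists hΩc hΩconv hΩ xb
    have hfp : f p ≤ f xb := by
      rw [hf, hf]
      have h1 : infDist p Ω = 0 := infDist_zero_of_mem hpΩ
      have h2 : infDist xb Θ ≤ infDist p Θ + dist xb p := infDist_le_infDist_add_dist
      have h3 : dist xb p = infDist xb Ω := hdp
      linarith
    have := huni p (fun x => le_trans hfp (hmin x))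
    rw [← this]; exact hpΩ
  have hΩ0 : infDist xb Ω = 0 := infDist_zero_of_mem hxbΩ
  -- Step C : xb ∈ Θ
  have hxbΘ : xb ∈ Θ := by
    by_contra hxn
    obtain ⟨q, hqΘ, hdq, hqn⟩ := proj_exists hΘc hΘconv hΘ xb
    set r := infDist xb Θ with hr
    have hrpos : 0 < r := (hΘc.notMem_iff_infDist_pos hΘ).mp hxn
    set w : EuclideanSpace ℝ (Fin n) := xb - q with hwdef
    have hw : ‖w‖ = r := by rw [← dist_eq_norm]; exact hdq
    set y : EuclideanSpace ℝ (Fin n) := xb + w with hydef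
    have hyΩ : infDist y Ω ≤ r := by
      refine le_trans (infDist_le_dist_of_mem hxbΩ) ?_
      rw [dist_eq_norm]
      simp only [hydef]
      rw [show y - xb = w by simp [hydef]]
      exact le_of_eq hw
    have hyΘ : 2 * r ≤ infDist y Θ := by
      refine le_infDist' hΘ fun z hz => ?_
      have h1 : ⟪y - z, w⟫ ≤ dist y z * ‖w‖ := inner_le_dist_mul _ _ _
      have h2 : ⟪w, z - q⟫ ≤ 0 := hqn z hz
      have h3 : y - z = (q - z) + (2 : ℝ) • w := by
        simp only [hydef, hwdef]; module
      have h4 : ⟪y - z, w⟫ = ⟪q - z, w⟫ + 2 * ‖w‖ ^ 2 := by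
        rw [h3, inner_add_left, real_inner_smul_left, real_inner_self_eq_norm_sq]
      have h5 : ⟪q - z, w⟫ = -⟪w, z - q⟫ := by
        rw [show q - z = -(z - q) by abel, inner_neg_left, real_inner_comm]
      have h6 : 2 * r ^ 2 ≤ dist y z * r := by
        rw [← hw]
        nlinarith [h1, h2, h4, h5]
      have := (mul_le_mul_iff_left₀ hrpos).mp (by linarith : (2 * r) * r ≤ dist y z * r)
      linarith
    have hfy : f y ≤ f xb := by
      rw [hf, hf, hΩ0, ← hr]; linarith
    have h := huni y (fun x => le_trans hfy (hmin x))
    have hw0 : w = 0 := by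
      have : xb + w = xb := h
      simpa using this
    rw [hw0] at hw
    simp at hw
    exact absurd hw.symm (ne_of_gt hrpos)
  have hΘ0 : infDist xb Θ = 0 := infDist_zero_of_mem hxbΘ
  have hfxb : f xb = 0 := by rw [hf, hΩ0, hΘ0]; ring
  -- Step D : Ω ⊆ Θ  and Ω = {xb}
  have hΩΘ : Ω ⊆ Θ := by
    intro u hu
    have h := hmin u
    rw [hf, hf, hΩ0, hΘ0, infDist_zero_of_mem hu] at h
    have h0 : infDist u Θ ≤ 0 := by linarith
    have h1 : infDist u Θ = 0 := le_antisymm h0 infDist_nonneg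
    exact (hΘc.mem_iff_infDist_zero hΘ).mpr h1
  have hsing : Ω = {xb} := by
    ext u
    constructor
    · intro hu
      have hfu : f u = 0 := by
        rw [hf, infDist_zero_of_mem hu, infDist_zero_of_mem (hΩΘ hu)]; ring
      have : ∀ x, f u ≤ f x := fun x => by rw [hfu, ← hfxb]; exact hmin x
      exact huni u this
    · rintro rfl; exact hxbΩ
  refine ⟨hΩΘ, xb, hsing, ?_⟩
  -- Step E : xb ∈ interior Θ
  by_contra hni
  obtain ⟨v, hv0, hvn⟩ : ∃ v : EuclideanSpace ℝ (Fin n), v ≠ 0 ∧ ∀ z ∈ Θ, ⟪v, z - xb⟫ ≤ 0 := by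
    by_cases hint : (interior Θ).Nonempty
    · obtain ⟨g, hg⟩ := geometric_hahn_banach_open_point (hΘconv.interior) isOpen_interior hni
      obtain ⟨a0, ha0⟩ := hint
      have hgz : ∀ z ∈ Θ, g z ≤ g xb := by
        intro z hz
        have key : ∀ t : ℝ, t ∈ Set.Ioo (0 : ℝ) 1 → (1 - t) * g z + t * g a0 ≤ g xb := by
          intro t ht
          have hmem : (1 - t) • z + t • a0 ∈ interior Θ :=
            hΘconv.combo_closure_interior_mem_interior (subset_closure hz) ha0
              (by linarith [ht.2]) ht.1 (by ring)
          have := hg _ hmem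
          simpa [map_add, map_smul, smul_eq_mul] using this.le
        have htend : Filter.Tendsto (fun t : ℝ => (1 - t) * g z + t * g a0)
            (nhdsWithin 0 (Set.Ioo 0 1)) (nhds (g z)) := by
          have hc : Continuous fun t : ℝ => (1 - t) * g z + t * g a0 :=
            ((continuous_const.sub continuous_id).mul continuous_const).add
              (continuous_id.mul continuous_const)
          have h0 := hc.tendsto 0
          simp only [sub_zero, one_mul, zero_mul, add_zero] at h0
          exact h0.mono_left nhdsWithin_le_nhds
        haveI : (nhdsWithin (0 : ℝ) (Set.Ioo 0 1)).NeBot := by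
          apply mem_closure_iff_nhdsWithin_neBot.mp
          rw [closure_Ioo (by norm_num : (0:ℝ) ≠ 1)]
          exact ⟨le_refl 0, by norm_num⟩
        exact le_of_tendsto htend
          (Filter.eventually_of_mem self_mem_nhdsWithin (fun t ht => key t ht))
      set v := (InnerProductSpace.toDual ℝ (EuclideanSpace ℝ (Fin n))).symm g with hvdef
      have hvx : ∀ x, ⟪v, x⟫ = g x := fun x => InnerProductSpace.toDual_symm_apply
      refine ⟨v, ?_, fun z hz => ?_⟩
      · intro h0
        have : g a0 < g xb := hg a0 ha0
        have e1 : g a0 = 0 := by rw [← hvx a0, h0]; simp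
        have e2 : g xb = 0 := by rw [← hvx xb, h0]; simp
        rw [e1, e2] at this; exact lt_irrefl _ this
      · rw [inner_sub_right, hvx, hvx]
        linarith [hgz z hz]
    · have hspan : affineSpan ℝ Θ ≠ ⊤ := fun h =>
        hint (hΘconv.interior_nonempty_iff_affineSpan_eq_top.mpr h)
      set W := (affineSpan ℝ Θ).direction with hWdef
      have hW : W ≠ ⊤ := by
        intro h
        exact hspan (((affineSpan ℝ Θ).direction_eq_top_iff_of_nonempty
          ((affineSpan_nonempty ℝ).mpr hΘ)).mp h)
      have hWo : Wᗮ ≠ ⊥ := fun h => hW (Submodule.orthogonal_eq_bot_iff.mp h)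
      obtain ⟨v, hvW, hv0⟩ := Submodule.exists_mem_ne_zero_of_ne_bot hWo
      refine ⟨v, hv0, fun z hz => ?_⟩
      have hzW : z - xb ∈ W := by
        have h1 : z ∈ affineSpan ℝ Θ := subset_affineSpan ℝ Θ hz
        have h2 : xb ∈ affineSpan ℝ Θ := subset_affineSpan ℝ Θ hxbΘ
        simpa using AffineSubspace.vsub_mem_direction h1 h2
      have := hvW (z - xb) hzW
      rw [real_inner_comm] at this
      rw [this]
  -- derive contradiction
  set y : EuclideanSpace ℝ (Fin n) := xb + v with hydef
  have hvpos : 0 < ‖v‖ := norm_pos_iff.mpr hv0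
  have hyΩ : infDist y Ω ≤ ‖v‖ := by
    refine le_trans (infDist_le_dist_of_mem hxbΩ) ?_
    rw [dist_eq_norm, show y - xb = v by simp [hydef]]
  have hyΘ : ‖v‖ ≤ infDist y Θ := by
    refine le_infDist' hΘ fun z hz => ?_
    have h1 : ⟪y - z, v⟫ ≤ dist y z * ‖v‖ := inner_le_dist_mul _ _ _
    have h2 : ⟪v, z - xb⟫ ≤ 0 := hvn z hz
    have h3 : y - z = v - (z - xb) := by simp only [hydef]; abel
    have h4 : ⟪y - z, v⟫ = ‖v‖ ^ 2 - ⟪z - xb, v⟫ := by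
      rw [h3, inner_sub_left, real_inner_self_eq_norm_sq]
    rw [real_inner_comm] at h2
    have h5 : ‖v‖ ^ 2 ≤ dist y z * ‖v‖ := by nlinarith
    exact (mul_le_mul_iff_left₀ hvpos).mp (by nlinarith)
  have hfy : f y ≤ f xb := by rw [hf, hfxb]; linarith
  have h := huni y (fun x => le_trans hfy (hmin x))
  have : v = 0 := by
    have : xb + v = xb := h
    simpa using this
  exact hv0 this
end
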